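/- Let U : [0, T] → (ℝ^d)^J be a continuously differentiable solution of the ensemble Kalman particle dynamics. Then the ensemble mean m(t) := (1/J) Σ_{j=1}^J u^j(t) is continuously differentiable and satisfies the closed first-moment equation d/dt m(t) = C(U(t)) Gᵀ Γ^{-1} (y − G m(t)). -/

import Mathlib

/-!
First-moment equation: along any C¹ solution of the ensemble Kalman particle dynamics,
the ensemble mean `m(t) = (1/J) ∑ⱼ uʲ(t)` satisfies
`d/dt m = C(U) Gᵀ Γ⁻¹ (y − G m)`.
-/

open Matrix Set

attribute [local instance] Matrix.normedAddCommGroup Matrix.normedSpace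

/-- The sample mean `Ū = (1/J) ∑ⱼ uʲ` of an ensemble `U ∈ (ℝ^d)^J`. -/
noncomputable def sampleMean {d J : ℕ} (U : Fin J → Fin d → ℝ) : Fin d → ℝ :=
  (J : ℝ)⁻¹ • ∑ j, U j

/-- The sample covariance `C(U) = (1/J) ∑ⱼ (uʲ − Ū) ⊗ (uʲ − Ū)`. -/
noncomputable def sampleCov {d J : ℕ} (U : Fin J → Fin d → ℝ) :
    Matrix (Fin d) (Fin d) ℝ :=
  (J : ℝ)⁻¹ • ∑ j, vecMulVec (U j - sampleMean U) (U j - sampleMean U)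

/-- Right-hand side of the ensemble Kalman particle dynamics:
`(d/dt) uʲ = C(U) Gᵀ Γ⁻¹ (y − G uʲ)`. -/
noncomputable def enkfRHS {d k J : ℕ} (G : Matrix (Fin k) (Fin d) ℝ)
    (Γ : Matrix (Fin k) (Fin k) ℝ) (y : Fin k → ℝ) (U : Fin J → Fin d → ℝ) :
    Fin J → Fin d → ℝ :=
  fun j => (sampleCov U * Gᵀ * Γ⁻¹).mulVec (y - G.mulVec (U j))

theorem enkf_mean_equation
    {d k J : ℕ} (hd : 1 ≤ d) (hk : 1 ≤ k) (hJ : 1 ≤ J)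
    (G : Matrix (Fin k) (Fin d) ℝ) (Γ : Matrix (Fin k) (Fin k) ℝ)
    (hΓ : Γ.PosDef) (y : Fin k → ℝ)
    (T : ℝ) (hT : 0 < T) (U : ℝ → Fin J → Fin d → ℝ)
    (hU : ∀ t ∈ Icc (0 : ℝ) T, HasDerivWithinAt U (enkfRHS G Γ y (U t)) (Icc 0 T) t) :
    ∀ t ∈ Icc (0 : ℝ) T,
      HasDerivWithinAt (fun s => sampleMean (U s))
        ((sampleCov (U t) * Gᵀ * Γ⁻¹).mulVec (y - G.mulVec (sampleMean (U t))))
        (Icc 0 T) t := by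
  intro t ht
  have h := hU t ht
  have hJ' : (J : ℝ) ≠ 0 := Nat.cast_ne_zero.mpr (by omega)
  have hcomp : ∀ j, HasDerivWithinAt (fun s => U s j) (enkfRHS G Γ y (U t) j) (Icc 0 T) t :=
    fun j => (hasDerivWithinAt_pi.mp h) j
  have hsum : HasDerivWithinAt (fun s => ∑ j, U s j)
      (∑ j, enkfRHS G Γ y (U t) j) (Icc 0 T) t :=
    HasDerivWithinAt.fun_sum (fun j _ => hcomp j)
  have hm := hsum.const_smul ((J : ℝ)⁻¹)
  have key : (J : ℝ)⁻¹ • ∑ j, enkfRHS G Γ y (U t) j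
      = (sampleCov (U t) * Gᵀ * Γ⁻¹).mulVec (y - G.mulVec (sampleMean (U t))) := by
    simp only [enkfRHS, sampleMean, Matrix.mulVec_sub, Matrix.mulVec_smul,
      Finset.sum_sub_distrib, Finset.sum_const, Finset.card_univ, Fintype.card_fin,
      smul_sub, smul_smul]
    congr 1
    · rw [← Nat.cast_smul_eq_nsmul ℝ, smul_smul, inv_mul_cancel₀ hJ', one_smul]
    · have hs : ∀ (p q : ℕ) (A : Matrix (Fin p) (Fin q) ℝ) (v : Fin J → Fin q → ℝ),
          ∑ j, A.mulVec (v j) = A.mulVec (∑ j, v j) := fun p q A v => by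
        rw [show A.mulVec (∑ j, v j) = A.mulVecLin (∑ j, v j) from rfl, map_sum]; rfl
      rw [hs _ _ _ (fun j => G.mulVec (U t j)), hs _ _ G (U t)]
  have : (fun s => sampleMean (U s)) = fun s => (J : ℝ)⁻¹ • ∑ j, U s j := by
    funext s; rfl
  rw [this, ← key]
  exact hm
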